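/- For every n ≥ 1 there exists an orientation K⃗ₙ of the complete graph Kₙ with th(K⃗ₙ) = ⌈2√n − 1⌉. -/
import Mathlib


open Set

/-- One time step of standard zero forcing on a digraph with arc relation `A`:
every blue vertex having a unique white out-neighbor forces it blue. -/
def dstep {V : Type*} (A : V → V → Prop) (S : Set V) : Set V :=
  S ∪ {w | ∃ u ∈ S, A u w ∧ ∀ x, A u x → x ∉ S → x = w}

/-- `B` is a zero forcing set of the digraph with arc relation `A`. -/
def IsZFS {V : Type*} (A : V → V → Prop) (B : Set V) : Prop :=
  ∃ t, (dstep A)^[t] B = Set.univ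

/-- Propagation time of `B` in the digraph with arc relation `A`. -/
noncomputable def dpt {V : Type*} (A : V → V → Prop) (B : Set V) : ℕ :=
  sInf {t | (dstep A)^[t] B = Set.univ}

/-- The throttling number of the digraph with arc relation `A`. -/
noncomputable def dth {V : Type*} (A : V → V → Prop) : ℕ :=
  sInf {k | ∃ B : Set V, IsZFS A B ∧ k = B.ncard + dpt A B}

/-- `A` is an orientation of the simple graph `G`: every arc lies on an edge of `G`,
and each edge of `G` gets exactly one direction. -/
def IsOrientation {V : Type*} (G : SimpleGraph V) (A : V → V → Prop) : Prop :=
  (∀ u v, A u v → G.Adj u v) ∧ ∀ u v, G.Adj u v → (A u v ↔ ¬ A v u)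


open Classical in
noncomputable def forcer {V : Type*} (A : V → V → Prop) (S : Set V) (w : V) : V :=
  if h : ∃ u ∈ S, A u w ∧ ∀ x, A u x → x ∉ S → x = w then h.choose else w

lemma subset_dstep {V : Type*} (A : V → V → Prop) (S : Set V) : S ⊆ dstep A S :=
  Set.subset_union_left

lemma forcer_spec {V : Type*} {A : V → V → Prop} {S : Set V} {w : V}
    (hw : w ∈ dstep A S) (hw' : w ∉ S) :
    forcer A S w ∈ S ∧ A (forcer A S w) w ∧
      ∀ x, A (forcer A S w) x → x ∉ S → x = w := by
  rcases hw with h | h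
  · exact absurd h hw'
  · obtain ⟨u, hu, h1, h2⟩ := h
    have hex : ∃ u ∈ S, A u w ∧ ∀ x, A u x → x ∉ S → x = w := ⟨u, hu, h1, h2⟩
    rw [forcer, dif_pos hex]
    obtain ⟨a, b, c⟩ := hex.choose_spec
    exact ⟨a, b, c⟩

/-- Non-exhausted vertices: blue vertices with a white out-neighbor. -/
def NE' {V : Type*} (A : V → V → Prop) (S : Set V) : Set V :=
  {u | u ∈ S ∧ ∃ x, A u x ∧ x ∉ S}

lemma card_dstep {V : Type*} [Finite V] (A : V → V → Prop) (S : Set V) :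
    (dstep A S).ncard ≤ S.ncard + (NE' A S).ncard := by
  have h1 : dstep A S = S ∪ (dstep A S \ S) :=
    (Set.union_diff_cancel (subset_dstep A S)).symm
  have h2 : (dstep A S \ S).ncard ≤ (NE' A S).ncard := by
    apply Set.ncard_le_ncard_of_injOn (forcer A S)
    · intro w hw
      obtain ⟨hu, hA, _⟩ := forcer_spec hw.1 hw.2
      exact ⟨hu, w, hA, hw.2⟩
    · intro w hw w' hw' he
      obtain ⟨_, _, h3⟩ := forcer_spec hw.1 hw.2
      obtain ⟨_, h2', _⟩ := forcer_spec hw'.1 hw'.2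
      rw [he] at h3
      exact (h3 w' h2' hw'.2).symm
  calc (dstep A S).ncard = (S ∪ (dstep A S \ S)).ncard := by rw [← h1]
    _ ≤ S.ncard + (dstep A S \ S).ncard := Set.ncard_union_le _ _
    _ ≤ S.ncard + (NE' A S).ncard := Nat.add_le_add_left h2 _

lemma card_NE_dstep {V : Type*} [Finite V] (A : V → V → Prop) (S : Set V) :
    (NE' A (dstep A S)).ncard ≤ (NE' A S).ncard := by
  classical
  apply Set.ncard_le_ncard_of_injOn (fun u => if u ∈ S then u else forcer A S u)
  · intro u hu
    obtain ⟨huS, x, hx, hxn⟩ := hu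
    by_cases h : u ∈ S
    · simp only [if_pos h]
      exact ⟨h, x, hx, fun hh => hxn (subset_dstep A S hh)⟩
    · simp only [if_neg h]
      obtain ⟨h1, h2, _⟩ := forcer_spec huS h
      exact ⟨h1, u, h2, h⟩
  · intro u hu u' hu' he
    simp only at he
    by_cases h : u ∈ S <;> by_cases h' : u' ∈ S
    · rwa [if_pos h, if_pos h'] at he
    · -- u ∈ S, u' ∉ S : u = forcer of u'
      rw [if_pos h, if_neg h'] at he
      obtain ⟨_, _, h3⟩ := forcer_spec hu'.1 h'
      obtain ⟨_, x, hx, hxn⟩ := hu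
      have hxS : x ∉ S := fun hh => hxn (subset_dstep A S hh)
      rw [he] at hx
      have hxe : x = u' := h3 x hx hxS
      rw [hxe] at hxn
      exact absurd hu'.1 hxn
    · -- symmetric
      rw [if_neg h, if_pos h'] at he
      obtain ⟨_, _, h3⟩ := forcer_spec hu.1 h
      obtain ⟨_, x, hx, hxn⟩ := hu'
      have hxS : x ∉ S := fun hh => hxn (subset_dstep A S hh)
      rw [← he] at hx
      have hxe : x = u := h3 x hx hxS
      rw [hxe] at hxn
      exact absurd hu.1 hxn
    · rw [if_neg h, if_neg h'] at he
      obtain ⟨_, _, h3⟩ := forcer_spec hu.1 h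
      obtain ⟨_, h2', _⟩ := forcer_spec hu'.1 h'
      rw [he] at h3
      exact (h3 u' h2' h').symm

lemma iter_card {V : Type*} [Finite V] (A : V → V → Prop) (B : Set V) (s : ℕ) :
    ((dstep A)^[s] B).ncard ≤ B.ncard * (s + 1) := by
  induction s with
  | zero => simpa using le_refl B.ncard
  | succ s ih =>
    have hne : (NE' A ((dstep A)^[s] B)).ncard ≤ B.ncard := by
      have key : ∀ j, (NE' A ((dstep A)^[j] B)).ncard ≤ (NE' A B).ncard := by
        intro j
        induction j with
        | zero => simp
        | succ j ihj =>
          rw [Function.iterate_succ_apply']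
          exact le_trans (card_NE_dstep A _) ihj
      exact le_trans (key s)
        (Set.ncard_le_ncard (fun u hu => hu.1) (Set.toFinite _))
    rw [Function.iterate_succ_apply']
    calc (dstep A ((dstep A)^[s] B)).ncard
        ≤ ((dstep A)^[s] B).ncard + (NE' A ((dstep A)^[s] B)).ncard := card_dstep A _
      _ ≤ B.ncard * (s + 1) + B.ncard := Nat.add_le_add ih hne
      _ = B.ncard * (s + 1 + 1) := by ring

lemma arith_lower (n K T : ℕ) (h : n ≤ K * (T + 1)) :
    ⌈2 * Real.sqrt n - 1⌉₊ ≤ K + T := by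
  rw [Nat.ceil_le]
  have hn' : (n : ℝ) ≤ K * (T + 1) := by exact_mod_cast h
  have h1 : Real.sqrt n ≤ ((K : ℝ) + T + 1) / 2 := by
    have h2 : (n : ℝ) ≤ (((K : ℝ) + T + 1) / 2) ^ 2 := by
      nlinarith [sq_nonneg ((K : ℝ) - T - 1)]
    calc Real.sqrt n ≤ Real.sqrt ((((K : ℝ) + T + 1) / 2) ^ 2) := Real.sqrt_le_sqrt h2
      _ = ((K : ℝ) + T + 1) / 2 := Real.sqrt_sq (by positivity)
  push_cast
  linarith

/-- For every `n ≥ 1` there is an orientation of the complete graph `Kₙ` whose throttling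
number is `⌈2√n - 1⌉`. -/
theorem stmt15 (n : ℕ) (hn : 1 ≤ n) :
    ∃ A : Fin n → Fin n → Prop,
      IsOrientation (⊤ : SimpleGraph (Fin n)) A ∧
      dth A = ⌈2 * Real.sqrt n - 1⌉₊ := by
  set m : ℕ := ⌈2 * Real.sqrt n - 1⌉₊ with hm
  -- basic facts about m
  have hsqrt1 : (1 : ℝ) ≤ Real.sqrt n := by
    rw [show (1:ℝ) = Real.sqrt 1 by simp]
    exact Real.sqrt_le_sqrt (by exact_mod_cast hn)
  have hm1 : 1 ≤ m := by
    rw [hm, Nat.one_le_ceil_iff]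
    linarith
  have hmsq : 4 * n ≤ (m + 1) ^ 2 := by
    have h1 : 2 * Real.sqrt n - 1 ≤ (m : ℝ) := Nat.le_ceil _
    have h2 : (2 * Real.sqrt n) ^ 2 ≤ ((m : ℝ) + 1) ^ 2 := by
      apply pow_le_pow_left₀ (by positivity) (by linarith)
    rw [mul_pow, Real.sq_sqrt (by positivity)] at h2
    have : (4 * n : ℝ) ≤ (((m + 1) : ℕ) : ℝ) ^ 2 := by push_cast; push_cast at h2; linarith
    exact_mod_cast this
  have hmn : m ≤ 2 * n - 1 := by
    rw [hm, Nat.ceil_le]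
    have h1n : (1:ℝ) ≤ (n:ℝ) := by exact_mod_cast hn
    have hs : Real.sqrt n ≤ (n : ℝ) := by
      have hnn : (n:ℝ) ≤ ((n:ℝ))^2 := by nlinarith
      calc Real.sqrt n ≤ Real.sqrt ((n:ℝ)^2) := Real.sqrt_le_sqrt hnn
        _ = (n:ℝ) := Real.sqrt_sq (by positivity)
    have : ((2 * n - 1 : ℕ) : ℝ) = 2 * n - 1 := by
      push_cast [Nat.cast_sub (by omega : 1 ≤ 2 * n)]; ring
    rw [this]; linarith
  -- choose K and t
  set K : ℕ := (m + 2) / 2 with hK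
  set b : ℕ := (m + 1) / 2 with hb
  have hK1 : 1 ≤ K := by omega
  have hb1 : 1 ≤ b := by omega
  have hKb : K + b = m + 1 := by omega
  have hcov : n ≤ K * b := by
    rcases Nat.even_or_odd m with ⟨r, hr⟩ | ⟨r, hr⟩
    · have hKr : K = r + 1 := by omega
      have hbr : b = r := by omega
      rw [hKr, hbr]
      have hr1 : 1 ≤ r := by omega
      nlinarith [hmsq, hr]
    · have hKr : K = r + 1 := by omega
      have hbr : b = r + 1 := by omega
      rw [hKr, hbr]
      nlinarith [hmsq, hr]
  have hKn : K ≤ n := by omega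
  set t : ℕ := b - 1 with ht
  have htb : t + 1 = b := by omega
  have hKt : K + t = m := by omega
  -- the orientation
  set A : Fin n → Fin n → Prop :=
    fun u v => (v : ℕ) = (u : ℕ) + K ∨ ((v : ℕ) < (u : ℕ) ∧ (v : ℕ) + K ≠ (u : ℕ)) with hA
  have horient : IsOrientation (⊤ : SimpleGraph (Fin n)) A := by
    constructor
    · intro u v huv
      simp only [SimpleGraph.top_adj]
      intro he
      rw [he] at huv
      rcases huv with h | h <;> omega
    · intro u v huv
      simp only [SimpleGraph.top_adj] at huv
      have : (u : ℕ) ≠ (v : ℕ) := fun h => huv (Fin.ext h)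
      simp only [hA]
      omega
  -- the zero forcing set
  set B : Set (Fin n) := {v : Fin n | (v : ℕ) < K} with hB
  have hiter : ∀ s, (dstep A)^[s] B = {v : Fin n | (v : ℕ) < K * (s + 1)} := by
    intro s
    induction s with
    | zero => simp [hB]
    | succ s ih =>
      rw [Function.iterate_succ_apply', ih]
      have he : K * (s + 1 + 1) = K * (s + 1) + K := by ring
      have hle : K ≤ K * (s + 1) := Nat.le_mul_of_pos_right K (by omega)
      ext v
      constructor
      · rintro (hv | ⟨u, hu, hAuv, _⟩)
        · simp only [mem_setOf_eq] at hv ⊢; omega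
        · simp only [mem_setOf_eq] at hu ⊢
          rcases hAuv with h | h <;> omega
      · intro hv
        simp only [mem_setOf_eq] at hv
        by_cases hvs : (v : ℕ) < K * (s + 1)
        · exact Or.inl hvs
        · right
          have hKv : K ≤ (v : ℕ) := by omega
          refine ⟨⟨(v : ℕ) - K, by omega⟩, ?_, ?_, ?_⟩
          · simp only [mem_setOf_eq]; omega
          · left; simp only []; omega
          · intro x hx hxS
            simp only [mem_setOf_eq] at hxS
            rcases hx with h | h
            · apply Fin.ext
              simp only [] at h
              omega
            · exfalso
              simp only [] at h
              omega
  have huniv : (dstep A)^[t] B = univ := by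
    rw [hiter t, htb]
    ext v
    simp only [mem_setOf_eq, mem_univ, iff_true]
    exact lt_of_lt_of_le v.2 hcov
  have hZFS : IsZFS A B := ⟨t, huniv⟩
  have hpt : dpt A B ≤ t := Nat.sInf_le huniv
  have hcard : B.ncard = K := by
    rw [← Nat.card_coe_set_eq]
    have e : B ≃ Fin K :=
      { toFun := fun x => ⟨(x.1 : ℕ), x.2⟩
        invFun := fun i => ⟨⟨(i : ℕ), lt_of_lt_of_le i.2 hKn⟩, i.2⟩
        left_inv := fun x => rfl
        right_inv := fun i => rfl }
    rw [Nat.card_congr e, Nat.card_eq_fintype_card, Fintype.card_fin]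
  refine ⟨A, horient, ?_⟩
  have hupper : dth A ≤ m := by
    have h1 : dth A ≤ B.ncard + dpt A B := Nat.sInf_le ⟨B, hZFS, rfl⟩
    omega
  have hlower : ∀ j ∈ {k | ∃ B' : Set (Fin n), IsZFS A B' ∧ k = B'.ncard + dpt A B'},
      m ≤ j := by
    rintro j ⟨B', hZ, rfl⟩
    obtain ⟨t0, ht0⟩ := hZ
    have hmem : (dstep A)^[dpt A B'] B' = univ := by
      have h0 : ({t | (dstep A)^[t] B' = Set.univ} : Set ℕ).Nonempty := ⟨t0, ht0⟩
      exact Nat.sInf_mem h0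
    have hn2 : n ≤ B'.ncard * (dpt A B' + 1) := by
      have h1 := iter_card A B' (dpt A B')
      rw [hmem, Set.ncard_univ, Nat.card_eq_fintype_card, Fintype.card_fin] at h1
      exact h1
    exact arith_lower n _ _ hn2
  have hne : ({k | ∃ B' : Set (Fin n), IsZFS A B' ∧ k = B'.ncard + dpt A B'}).Nonempty :=
    ⟨B.ncard + dpt A B, B, hZFS, rfl⟩
  exact le_antisymm hupper (hlower _ (Nat.sInf_mem hne))
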